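/- arXiv:1712.08747 — 2 statements merged into one kernel-verified Lean document; each statement's English description precedes it below -/
import Mathlib

section
/- Let λ, μ, ν, M, A > 0 and define g(u) = A · E[min{E_μ, E_ν · max{1, u/M}}] for u ≥ 0, where E_μ, E_ν are independent exponentials with rates μ, ν. Then the fixed-point equation u = g(u) has a unique nonnegative solution u*. -/
/-- The fluid fixed-point map: `g u = A · E[min{E_μ, E_ν · max{1, u/M}}]`,
written explicitly using the expectation of the minimum of independent
exponentials: `g u = A/(μ+ν)` if `u ≤ M` and `g u = A·(u/M)/((u/M)·μ + ν)` else. -/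
noncomputable def fluidMap (A M μ ν : ℝ) (u : ℝ) : ℝ :=
  if u ≤ M then A / (μ + ν) else A * (u / M) / ((u / M) * μ + ν)

theorem fluid_fixed_point_exists_unique (lam A M μ ν : ℝ)
    (hlam : 0 < lam) (hμ : 0 < μ) (hν : 0 < ν) (hM : 0 < M) (hA : 0 < A) :
    ∃! u : ℝ, 0 ≤ u ∧ fluidMap A M μ ν u = u := by
  have hμν : 0 < μ + ν := by linarith
  -- key algebraic fact: for y > M, fluidMap y = y ↔ y = (A - ν*M)/μ
  have key : ∀ y : ℝ, M < y → fluidMap A M μ ν y = y → y = (A - ν * M) / μ := by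
    intro y hy hfy
    have hyM : ¬ y ≤ M := not_le.mpr hy
    have hy0 : 0 < y := lt_trans hM hy
    have hden : 0 < (y / M) * μ + ν := by positivity
    rw [fluidMap, if_neg hyM] at hfy
    field_simp at hfy
    have h1 : y * (y * μ + ν * M) = y * A := by linear_combination -y * hfy
    have h2 : y * μ + ν * M = A := mul_left_cancel₀ (ne_of_gt hy0) h1
    field_simp
    linarith
  by_cases hc : A / (μ + ν) ≤ M
  · refine ⟨A / (μ + ν), ⟨by positivity, ?_⟩, ?_⟩
    · rw [fluidMap, if_pos hc]
    · rintro y ⟨hy0, hfy⟩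
      by_cases hyM : y ≤ M
      · rw [fluidMap, if_pos hyM] at hfy
        exact hfy.symm
      · exfalso
        push_neg at hyM
        have hy := key y hyM hfy
        have : M * (μ + ν) < A := by
          rw [hy] at hyM
          have := (lt_div_iff₀ hμ).mp hyM
          linarith
        have : M < A / (μ + ν) := (lt_div_iff₀ hμν).mpr (by linarith)
        linarith
  · push_neg at hc
    have hAM : M * (μ + ν) < A := (lt_div_iff₀ hμν).mp hc
    set u := (A - ν * M) / μ with hu
    have huM : M < u := by
      rw [hu, lt_div_iff₀ hμ]
      nlinarith
    have hu0 : 0 ≤ u := le_of_lt (lt_trans hM huM)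
    refine ⟨u, ⟨hu0, ?_⟩, ?_⟩
    · rw [fluidMap, if_neg (not_le.mpr huM), hu]
      have hM' : (M : ℝ) ≠ 0 := ne_of_gt hM
      have hμ' : (μ : ℝ) ≠ 0 := ne_of_gt hμ
      have hden : ((A - ν * M) / μ / M) * μ + ν = A / M := by
        field_simp
        ring
      rw [hden]
      field_simp
    · rintro y ⟨hy0, hfy⟩
      by_cases hyM : y ≤ M
      · exfalso
        rw [fluidMap, if_pos hyM] at hfy
        linarith [hfy]
      · push_neg at hyM
        rw [key y hyM hfy, hu]
end

section
/- In the case K = M, the two-dimensional Markov chain (U, Q) on {(u,q) : 0 ≤ u ≤ q ≤ K} with transitions (u,q)→(u+1,q+1) at rate λ (if q < K), (u,q)→(u−1,q) at rate uν, (u,q)→(u−1,q−1) at rate uμ, and (u,q)→(u,q−1) at rate (q−u)μ, has stationary distribution π(u,q) proportional to (λ/(μ+ν))^u / u! · (λν/(μ(μ+ν)))^{q−u} / (q−u)! restricted to 0 ≤ u ≤ q ≤ K; verify that this measure satisfies the global balance equations. -/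
set_option maxHeartbeats 2000000

/-- Candidate stationary measure for the `K = M` charging-station chain:
`π(u,q) ∝ (λ/(μ+ν))^u/u! · (λν/(μ(μ+ν)))^{q−u}/(q−u)!` on `0 ≤ u ≤ q ≤ K`
and `0` outside this region. -/
noncomputable def statMeas (lam μ ν : ℝ) (K : ℕ) (u q : ℕ) : ℝ :=
  if u ≤ q ∧ q ≤ K then
    (lam / (μ + ν)) ^ u / (Nat.factorial u) *
      (lam * ν / (μ * (μ + ν))) ^ (q - u) / (Nat.factorial (q - u))
  else 0

lemma sm_in (lam μ ν : ℝ) (K u d : ℕ) (h : u + d ≤ K) :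
    statMeas lam μ ν K u (u + d) =
      (lam / (μ + ν)) ^ u / (Nat.factorial u) *
        (lam * ν / (μ * (μ + ν))) ^ d / (Nat.factorial d) := by
  simp [statMeas, Nat.le_add_right, h]

lemma sm_out (lam μ ν : ℝ) (K u q : ℕ) (h : ¬(u ≤ q ∧ q ≤ K)) :
    statMeas lam μ ν K u q = 0 := by
  simp [statMeas, h]

/-- Global balance equations for the `K = M` chain: for each state `(u,q)` with
`u ≤ q ≤ K`, total outflow rate equals total inflow rate under `statMeas`.
Transitions: arrival `(u,q)→(u+1,q+1)` at rate `λ` if `q < K`; charge completion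
`(u,q)→(u−1,q)` at rate `uν`; departure uncharged `(u,q)→(u−1,q−1)` at rate `uμ`;
departure charged `(u,q)→(u,q−1)` at rate `(q−u)μ`. -/
theorem statMeas_global_balance (lam μ ν : ℝ) (K : ℕ)
    (hlam : 0 < lam) (hμ : 0 < μ) (hν : 0 < ν) :
    ∀ u q : ℕ, u ≤ q → q ≤ K →
      statMeas lam μ ν K u q *
          ((if q < K then lam else 0) + u * ν + u * μ + (q - u : ℕ) * μ)
        = (if 1 ≤ u then statMeas lam μ ν K (u - 1) (q - 1) * lam else 0)
          + statMeas lam μ ν K (u + 1) q * ((u + 1) * ν)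
          + statMeas lam μ ν K (u + 1) (q + 1) * ((u + 1) * μ)
          + statMeas lam μ ν K u (q + 1) * ((q + 1 - u : ℕ) * μ) := by
  intro u q huq hqK
  obtain ⟨d, rfl⟩ := Nat.exists_eq_add_of_le huq
  have hμν : μ + ν ≠ 0 := by positivity
  have hμ' : μ ≠ 0 := ne_of_gt hμ
  have hν' : ν ≠ 0 := ne_of_gt hν
  have hl' : lam ≠ 0 := ne_of_gt hlam
  have hsub : u + d - u = d := Nat.add_sub_cancel_left u d
  have hsub1 : u + (d + 1) - u = d + 1 := by omega
  by_cases hK : u + d < K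
  · -- q < K
    have hq1 : u + d + 1 ≤ K := hK
    rw [if_pos hK]
    rw [sm_in lam μ ν K u d hqK]
    rw [show u + d + 1 = (u + 1) + d by ring, sm_in lam μ ν K (u+1) d (by omega)]
    rw [show (u + 1) + d = u + (d + 1) by ring, sm_in lam μ ν K u (d+1) (by omega)]
    rw [hsub, hsub1]
    rcases u with _ | v
    · rw [if_neg (by omega)]
      rcases d with _ | e
      · rw [sm_out lam μ ν K 1 0 (by omega)]
        simp [Nat.factorial_succ]
        field_simp
      · rw [show (0:ℕ) + (e+1) = 1 + e by ring, sm_in lam μ ν K 1 e (by omega)]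
        push_cast [Nat.factorial_succ]
        simp only [div_pow]
        field_simp
        ring
    · rw [if_pos (by omega)]
      rw [show v + 1 - 1 = v by omega, show v + 1 + d - 1 = v + d by omega,
        sm_in lam μ ν K v d (by omega)]
      rcases d with _ | e
      · rw [sm_out lam μ ν K (v+2) (v+1) (by omega)]
        push_cast [Nat.factorial_succ]
        simp only [div_pow]
        field_simp
        ring
      · rw [show v + 1 + (e+1) = (v+2) + e by ring, sm_in lam μ ν K (v+2) e (by omega)]
        push_cast [Nat.factorial_succ]
        simp only [div_pow]
        field_simp
        ring
  · -- q = K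
    have hqK' : u + d = K := by omega
    rw [if_neg hK]
    rw [sm_in lam μ ν K u d hqK]
    rw [sm_out lam μ ν K (u+1) (u+d+1) (by omega)]
    rw [sm_out lam μ ν K u (u+d+1) (by omega)]
    rw [hsub]
    rcases u with _ | v
    · rw [if_neg (by omega)]
      rcases d with _ | e
      · rw [sm_out lam μ ν K 1 0 (by omega)]
        simp
      · rw [show (0:ℕ) + (e+1) = 1 + e by ring, sm_in lam μ ν K 1 e (by omega)]
        push_cast [Nat.factorial_succ]
        simp only [div_pow]
        field_simp
        ring
    · rw [if_pos (by omega)]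
      rw [show v + 1 - 1 = v by omega, show v + 1 + d - 1 = v + d by omega,
        sm_in lam μ ν K v d (by omega)]
      rcases d with _ | e
      · rw [sm_out lam μ ν K (v+2) (v+1) (by omega)]
        push_cast [Nat.factorial_succ]
        simp only [div_pow]
        field_simp
        ring
      · rw [show v + 1 + (e+1) = (v+2) + e by ring, sm_in lam μ ν K (v+2) e (by omega)]
        push_cast [Nat.factorial_succ]
        simp only [div_pow]
        field_simp
        ring
end
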